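/- Let ℓ be any prime number and n ≥ 1 an integer. Then the rational number G_n := ℓ(1 − ℓ^n)B_n is an integer. -/

import Mathlib

/-- The `ℓ`-Genocchi number `G_n = ℓ(1 - ℓ^n)B_n`, a priori a rational number. -/
noncomputable def genocchi (ℓ : ℕ) (n : ℕ) : ℚ :=
  (ℓ : ℚ) * (1 - (ℓ : ℚ) ^ n) * bernoulli n

open Finset

/-- `q` is `p`-integral: it can be written with denominator prime to `p`. -/
def PInt (p : ℕ) (q : ℚ) : Prop := ∃ a b : ℤ, ¬ (p:ℤ) ∣ b ∧ q * b = a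

namespace PInt

variable {p : ℕ}

lemma intCast (hp : p.Prime) (z : ℤ) : PInt p (z : ℚ) :=
  ⟨z, 1, by exact_mod_cast (Nat.prime_iff_prime_int.mp hp).not_dvd_one, by norm_num⟩

lemma natCast (hp : p.Prime) (m : ℕ) : PInt p (m : ℚ) := by
  simpa using intCast hp (m : ℤ)

lemma zero (hp : p.Prime) : PInt p 0 := by simpa using intCast hp 0

lemma mul (hp : p.Prime) {q r : ℚ} (hq : PInt p q) (hr : PInt p r) : PInt p (q * r) := by
  obtain ⟨a, b, hb, hab⟩ := hq
  obtain ⟨a', b', hb', hab'⟩ := hr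
  refine ⟨a * a', b * b', ?_, ?_⟩
  · rw [(Nat.prime_iff_prime_int.mp hp).dvd_mul]; tauto
  · push_cast
    calc (q * r) * (b * b') = (q * b) * (r * b') := by ring
    _ = (a : ℚ) * a' := by rw [hab, hab']

lemma add (hp : p.Prime) {q r : ℚ} (hq : PInt p q) (hr : PInt p r) : PInt p (q + r) := by
  obtain ⟨a, b, hb, hab⟩ := hq
  obtain ⟨a', b', hb', hab'⟩ := hr
  refine ⟨a * b' + a' * b, b * b', ?_, ?_⟩
  · rw [(Nat.prime_iff_prime_int.mp hp).dvd_mul]; tauto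
  · push_cast
    calc (q + r) * (b * b') = (q * b) * b' + (r * b') * b := by ring
    _ = (a : ℚ) * b' + (a' : ℚ) * b := by rw [hab, hab']

lemma neg {q : ℚ} (hq : PInt p q) : PInt p (-q) := by
  obtain ⟨a, b, hb, hab⟩ := hq
  exact ⟨-a, b, hb, by push_cast; rw [neg_mul, hab]⟩

lemma sub (hp : p.Prime) {q r : ℚ} (hq : PInt p q) (hr : PInt p r) : PInt p (q - r) := by
  simpa [sub_eq_add_neg] using add hp hq hr.neg

lemma sum (hp : p.Prime) {ι : Type*} {s : Finset ι} {f : ι → ℚ}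
    (h : ∀ i ∈ s, PInt p (f i)) : PInt p (∑ i ∈ s, f i) := by
  classical
  induction s using Finset.induction_on with
  | empty => simpa using zero hp
  | insert _ _ hx ih =>
    rw [Finset.sum_insert hx]
    exact add hp (h _ (Finset.mem_insert_self _ _))
      (ih fun i hi => h i (Finset.mem_insert_of_mem hi))

end PInt

/-- Key valuation lemma: `p^j / k` is `p`-integral provided `p^(j+1) ∤ k`. -/
lemma pint_ppow_div_core {p : ℕ} (hp : p.Prime) {j k : ℕ} (hk : k ≠ 0)
    (hnd : ¬ p ^ (j + 1) ∣ k) : PInt p ((p : ℚ) ^ j / (k : ℚ)) := by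
  set v := k.factorization p with hv
  have hdvd : p ^ v ∣ k := Nat.ordProj_dvd k p
  have hm : ¬ p ∣ k / p ^ v := Nat.not_dvd_ordCompl hp hk
  have hvj : v ≤ j := by
    by_contra h
    exact hnd (dvd_trans (pow_dvd_pow p (by omega)) hdvd)
  obtain ⟨m, hmk⟩ := hdvd
  have hm' : ¬ (p : ℤ) ∣ (m : ℤ) := by
    rw [Int.natCast_dvd_natCast]
    intro h; apply hm; rwa [hmk, Nat.mul_div_cancel_left m (Nat.pow_pos (n := v) hp.pos)]
  refine ⟨(p : ℤ) ^ (j - v), (m : ℤ), hm', ?_⟩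
  have hk0 : (k : ℚ) ≠ 0 := Nat.cast_ne_zero.mpr hk
  have hp0 : (p : ℚ) ≠ 0 := Nat.cast_ne_zero.mpr hp.pos.ne'
  have hkq : (k : ℚ) = (p : ℚ) ^ v * m := by exact_mod_cast congrArg (Nat.cast : ℕ → ℚ) hmk
  have hm0 : (m : ℚ) ≠ 0 := by
    intro h0
    rw [h0, mul_zero] at hkq; exact hk0 hkq
  push_cast
  rw [div_mul_eq_mul_div, div_eq_iff hk0, hkq, ← mul_assoc, ← pow_add]
  have : j - v + v = j := by omega
  rw [this]

lemma pint_ppow_div {p : ℕ} (hp : p.Prime) {k : ℕ} (hk : 1 ≤ k) :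
    PInt p ((p : ℚ) ^ (k - 1) / (k : ℚ)) := by
  apply pint_ppow_div_core hp (by omega)
  intro hdvd
  have h1 : k < 2 ^ k := Nat.lt_two_pow_self
  have h2 : 2 ^ k ≤ p ^ k := Nat.pow_le_pow_left hp.two_le k
  have h3 : p ^ (k - 1 + 1) ≤ k := Nat.le_of_dvd (by omega) hdvd
  have he : k - 1 + 1 = k := by omega
  rw [he] at h3
  omega

lemma pint_ppow_div' {p : ℕ} (hp : p.Prime) (hp2 : p ≠ 2) {k : ℕ} (hk : 2 ≤ k) :
    PInt p ((p : ℚ) ^ (k - 2) / (k : ℚ)) := by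
  apply pint_ppow_div_core hp (by omega)
  intro hdvd
  have hp3 : 3 ≤ p := by have := hp.two_le; omega
  have h1 : k - 1 < 2 ^ (k - 1) := Nat.lt_two_pow_self
  have h2 : 2 ^ (k - 1) < 3 ^ (k - 1) := by
    apply Nat.pow_lt_pow_left (by norm_num) (by omega)
  have h2' : 3 ^ (k - 1) ≤ p ^ (k - 1) := Nat.pow_le_pow_left hp3 (k - 1)
  have h3 : p ^ (k - 2 + 1) ≤ k := Nat.le_of_dvd (by omega) hdvd
  have he : k - 2 + 1 = k - 1 := by omega
  rw [he] at h3
  omega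

/-- Rearranged Faulhaber formula. -/
lemma faulhaber' (p n : ℕ) :
    (p : ℚ) * bernoulli n = (∑ k ∈ range p, (k : ℚ) ^ n)
      - ∑ i ∈ range n, (n.choose i : ℚ) * ((p : ℚ) * bernoulli i) *
          ((p : ℚ) ^ (n - i) / ((n + 1 - i : ℕ) : ℚ)) := by
  have h := sum_range_pow p n
  rw [Finset.sum_range_succ] at h
  have hn1 : ((n : ℚ) + 1) ≠ 0 := by positivity
  have hlast : bernoulli n * ((n + 1).choose n : ℚ) * (p : ℚ) ^ (n + 1 - n) / ((n : ℚ) + 1)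
      = (p : ℚ) * bernoulli n := by
    rw [Nat.choose_succ_self_right, Nat.add_sub_cancel_left, pow_one]
    push_cast
    field_simp
  have hterm : ∀ i ∈ range n,
      bernoulli i * ((n + 1).choose i : ℚ) * (p : ℚ) ^ (n + 1 - i) / ((n : ℚ) + 1)
      = (n.choose i : ℚ) * ((p : ℚ) * bernoulli i) * ((p : ℚ) ^ (n - i) / ((n + 1 - i : ℕ) : ℚ)) := by
    intro i hi
    rw [Finset.mem_range] at hi
    have hkey : ((n + 1 - i : ℕ) : ℚ) * ((n + 1).choose i : ℚ) = ((n : ℚ) + 1) * (n.choose i : ℚ) := by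
      have h1 : (n + 1) * n.choose (n - i) = (n + 1).choose (n - i + 1) * (n - i + 1) :=
        Nat.add_one_mul_choose_eq n (n - i)
      have h2 : n.choose (n - i) = n.choose i := Nat.choose_symm hi.le
      have h3 : (n + 1).choose (n - i + 1) = (n + 1).choose i := by
        have : n - i + 1 = n + 1 - i := by omega
        rw [this, Nat.choose_symm (by omega)]
      rw [h2, h3] at h1
      have h4 : n - i + 1 = n + 1 - i := by omega
      rw [h4] at h1
      have h5 : (n + 1 - i) * (n + 1).choose i = (n + 1) * n.choose i := by
        rw [mul_comm]; exact h1.symm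
      exact_mod_cast congrArg (Nat.cast : ℕ → ℚ) h5
    have hki : ((n + 1 - i : ℕ) : ℚ) ≠ 0 := by
      have : 0 < n + 1 - i := by omega
      positivity
    have hpow : (p : ℚ) ^ (n + 1 - i) = (p : ℚ) * (p : ℚ) ^ (n - i) := by
      rw [← pow_succ']
      congr 1
      omega
    rw [hpow]
    field_simp
    linear_combination (bernoulli i * ((p:ℚ) * (p:ℚ) ^ (n - i))) * hkey
  rw [Finset.sum_congr rfl hterm, hlast] at h
  linarith [h]

/-- `p · Bₙ` is `p`-integral. -/
lemma pint_p_mul_bernoulli {p : ℕ} (hp : p.Prime) (n : ℕ) :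
    PInt p ((p : ℚ) * bernoulli n) := by
  induction n using Nat.strong_induction_on with
  | _ n ih =>
    rw [faulhaber']
    apply PInt.sub hp
    · have : (∑ k ∈ range p, (k : ℚ) ^ n) = ((∑ k ∈ range p, (k : ℤ) ^ n : ℤ) : ℚ) := by
        push_cast; rfl
      rw [this]; exact PInt.intCast hp _
    · apply PInt.sum hp
      intro i hi
      rw [Finset.mem_range] at hi
      apply PInt.mul hp (PInt.mul hp (PInt.natCast hp _) (ih i hi))
      have he : n - i = (n + 1 - i) - 1 := by omega
      rw [he]
      exact pint_ppow_div hp (by omega)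

/-- For odd `p`, `(p Bₙ - Sₙ(p))/p` is `p`-integral. -/
lemma pint_sub_div {p : ℕ} (hp : p.Prime) (hp2 : p ≠ 2) (n : ℕ) :
    PInt p (((p : ℚ) * bernoulli n - ∑ k ∈ range p, (k : ℚ) ^ n) / p) := by
  have hp0 : (p : ℚ) ≠ 0 := Nat.cast_ne_zero.mpr hp.pos.ne'
  have key : (p : ℚ) * bernoulli n - ∑ k ∈ range p, (k : ℚ) ^ n
      = - ∑ i ∈ range n, (n.choose i : ℚ) * ((p : ℚ) * bernoulli i) *
          ((p : ℚ) ^ (n - i) / ((n + 1 - i : ℕ) : ℚ)) := by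
    rw [faulhaber' p n]; ring
  rw [key, neg_div, Finset.sum_div]
  apply PInt.neg
  apply PInt.sum hp
  intro i hi
  rw [Finset.mem_range] at hi
  have hterm : (n.choose i : ℚ) * ((p : ℚ) * bernoulli i) *
      ((p : ℚ) ^ (n - i) / ((n + 1 - i : ℕ) : ℚ)) / p
      = (n.choose i : ℚ) * ((p : ℚ) * bernoulli i) *
        ((p : ℚ) ^ (n - i - 1) / ((n + 1 - i : ℕ) : ℚ)) := by
    have hpow : (p : ℚ) ^ (n - i) = (p : ℚ) * (p : ℚ) ^ (n - i - 1) := by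
      rw [← pow_succ']
      congr 1
      omega
    rw [hpow]
    have hki : ((n + 1 - i : ℕ) : ℚ) ≠ 0 := by
      have : 0 < n + 1 - i := by omega
      positivity
    field_simp
  rw [hterm]
  apply PInt.mul hp (PInt.mul hp (PInt.natCast hp _) (pint_p_mul_bernoulli hp i))
  have he : n - i - 1 = (n + 1 - i) - 2 := by omega
  rw [he]
  exact pint_ppow_div' hp hp2 (by omega)

lemma sum_range_zmod (p : ℕ) [NeZero p] (f : ZMod p → ZMod p) :
    ∑ k ∈ range p, f (k : ZMod p) = ∑ x : ZMod p, f x := by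
  apply Finset.sum_nbij' (i := fun k => (k : ZMod p)) (j := fun x => x.val)
    (f := fun k : ℕ => f (k : ZMod p)) (g := f)
  · intro a _; exact Finset.mem_univ _
  · intro a _; exact Finset.mem_range.mpr (ZMod.val_lt a)
  · intro a ha; exact ZMod.val_cast_of_lt (Finset.mem_range.mp ha)
  · intro a _; exact ZMod.natCast_zmod_val a
  · intro a _; rfl

/-- Fermat-style vanishing: if `(p-1) ∤ n` then `p ∣ Σ_{k<p} kⁿ`. -/
lemma int_dvd_sum_pow {p : ℕ} (hp : p.Prime) {n : ℕ} (hn : 1 ≤ n)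
    (hnd : ¬ (p - 1) ∣ n) : (p : ℤ) ∣ ∑ k ∈ range p, (k : ℤ) ^ n := by
  haveI := Fact.mk hp
  rw [← ZMod.intCast_zmod_eq_zero_iff_dvd]
  push_cast
  have h1 : ∑ k ∈ range p, ((k : ZMod p)) ^ n = ∑ x : ZMod p, x ^ n :=
    sum_range_zmod p (fun x => x ^ n)
  rw [h1]
  classical
  let φ : (ZMod p)ˣ ↪ ZMod p := ⟨fun x => x, fun _ _ h => Units.ext h⟩
  have hφ : (Finset.univ.map φ) = Finset.univ \ {(0 : ZMod p)} := by
    ext x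
    simp only [Finset.mem_map, Finset.mem_univ, Function.Embedding.coeFn_mk, true_and,
      Finset.mem_sdiff, Finset.mem_singleton, φ]
    constructor
    · rintro ⟨u, rfl⟩; exact u.ne_zero
    · intro hx
      exact ⟨(isUnit_iff_ne_zero.mpr hx).unit, rfl⟩
  calc ∑ x : ZMod p, x ^ n
      = ∑ x ∈ Finset.univ \ {(0 : ZMod p)}, x ^ n := by
        rw [← Finset.sum_sdiff (Finset.subset_univ ({0} : Finset (ZMod p))),
          Finset.sum_singleton, zero_pow (by omega), add_zero]
    _ = ∑ x : (ZMod p)ˣ, ((x : ZMod p)) ^ n := by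
        rw [← hφ, Finset.sum_map]; rfl
    _ = 0 := by
        rw [FiniteField.sum_pow_units (ZMod p) n]
        rw [ZMod.card p]
        simp [hnd]

/-- A rational that is `p`-integral at every prime is an integer. -/
lemma isInt_of_forall_pint (q : ℚ) (h : ∀ p : ℕ, p.Prime → PInt p q) :
    ∃ z : ℤ, q = (z : ℚ) := by
  refine ⟨q.num, ?_⟩
  suffices hd : q.den = 1 by
    conv_lhs => rw [← Rat.num_div_den q]
    rw [hd]; simp
  by_contra hd
  obtain ⟨p, hp, hpd⟩ := Nat.exists_prime_and_dvd hd
  obtain ⟨a, b, hb, hab⟩ := h p hp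
  have hden0 : (q.den : ℚ) ≠ 0 := Nat.cast_ne_zero.mpr q.den_nz
  have h2 : (q.num : ℚ) * b = a * q.den := by
    have hq : (q.num : ℚ) = q * q.den := (div_eq_iff hden0).mp (Rat.num_div_den q)
    rw [hq]
    calc q * q.den * b = (q * b) * q.den := by ring
    _ = (a : ℚ) * q.den := by rw [hab]
  have h3 : q.num * b = a * q.den := by exact_mod_cast h2
  have h4 : (q.den : ℤ) ∣ q.num * b := ⟨a, by rw [h3]; ring⟩
  have h5 : q.den ∣ q.num.natAbs * b.natAbs := by
    have := Int.natAbs_dvd_natAbs.mpr h4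
    rwa [Int.natAbs_mul, Int.natAbs_natCast] at this
  have h6 : q.den ∣ b.natAbs := (Nat.Coprime.dvd_of_dvd_mul_left
    (Nat.Coprime.symm q.reduced) h5)
  apply hb
  have : p ∣ b.natAbs := hpd.trans h6
  exact Int.natCast_dvd.mpr this

theorem genocchi_isInteger' (ℓ : ℕ) (hℓ : ℓ.Prime) (n : ℕ) (hn : 1 ≤ n) :
    ∃ z : ℤ, (ℓ : ℚ) * (1 - (ℓ : ℚ) ^ n) * bernoulli n = (z : ℚ) := by
  apply isInt_of_forall_pint
  intro p hp
  by_cases hpl : p = ℓ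
  · subst hpl
    have he : (p : ℚ) * (1 - (p : ℚ) ^ n) * bernoulli n
        = ((1 - (p : ℤ) ^ n : ℤ) : ℚ) * ((p : ℚ) * bernoulli n) := by
      push_cast; ring
    rw [he]
    exact PInt.mul hp (PInt.intCast hp _) (pint_p_mul_bernoulli hp n)
  · by_cases hdvd : (p - 1) ∣ n
    · -- Fermat: p ∣ ℓ^n - 1
      haveI := Fact.mk hp
      have hfermat : (p : ℤ) ∣ 1 - (ℓ : ℤ) ^ n := by
        rw [← ZMod.intCast_zmod_eq_zero_iff_dvd]
        push_cast
        have hℓ0 : (ℓ : ZMod p) ≠ 0 := by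
          rw [Ne, ZMod.natCast_eq_zero_iff]
          intro hdv
          exact hpl ((Nat.prime_dvd_prime_iff_eq hp hℓ).mp hdv)
        obtain ⟨m, hm⟩ := hdvd
        rw [hm, pow_mul, ZMod.pow_card_sub_one_eq_one hℓ0, one_pow]
        ring
      obtain ⟨d, hd⟩ := hfermat
      have hdq : (1 : ℚ) - (ℓ : ℚ) ^ n = (p : ℚ) * (d : ℚ) := by exact_mod_cast congrArg (Int.cast : ℤ → ℚ) hd
      have he : (ℓ : ℚ) * (1 - (ℓ : ℚ) ^ n) * bernoulli n
          = (((ℓ : ℤ) * d : ℤ) : ℚ) * ((p : ℚ) * bernoulli n) := by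
        rw [hdq]; push_cast; ring
      rw [he]
      exact PInt.mul hp (PInt.intCast hp _) (pint_p_mul_bernoulli hp n)
    · have hp2 : p ≠ 2 := by
        rintro rfl
        exact hdvd (one_dvd n)
      have hp0 : (p : ℚ) ≠ 0 := Nat.cast_ne_zero.mpr hp.pos.ne'
      obtain ⟨e, he⟩ := int_dvd_sum_pow hp hn hdvd
      have hS : (∑ k ∈ range p, (k : ℚ) ^ n) = (p : ℚ) * (e : ℚ) := by
        have : ((∑ k ∈ range p, (k : ℤ) ^ n : ℤ) : ℚ) = (((p : ℤ) * e : ℤ) : ℚ) :=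
          congrArg (Int.cast : ℤ → ℚ) he
        push_cast at this
        convert this using 2
      have hbn : PInt p (bernoulli n) := by
        have hrw : bernoulli n
            = ((p : ℚ) * bernoulli n - ∑ k ∈ range p, (k : ℚ) ^ n) / p + (e : ℚ) := by
          rw [hS]
          field_simp
          ring
        rw [hrw]
        exact PInt.add hp (pint_sub_div hp hp2 n) (PInt.intCast hp e)
      have he2 : (ℓ : ℚ) * (1 - (ℓ : ℚ) ^ n) * bernoulli n
          = (((ℓ : ℤ) * (1 - (ℓ : ℤ) ^ n) : ℤ) : ℚ) * bernoulli n := by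
        push_cast; ring
      rw [he2]
      exact PInt.mul hp (PInt.intCast hp _) hbn


/-- For any prime `ℓ` and any `n ≥ 1`, the rational number
`G_n = ℓ(1 - ℓ^n)B_n` is an integer. -/
theorem genocchi_isInteger (ℓ : ℕ) (hℓ : ℓ.Prime) (n : ℕ) (hn : 1 ≤ n) :
    ∃ z : ℤ, genocchi ℓ n = (z : ℚ) := by
  simpa [genocchi] using genocchi_isInteger' ℓ hℓ n hn
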